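/- arXiv:2204.07407 — 2 statements merged into one kernel-verified Lean document; each statement's English description precedes it below -/
import Mathlib

section
/- For a probability distribution λ_1,...,λ_d (λ_i ≥ 0, Σ λ_i = 1), the total entropy S^t(λ) = -Σ_i [λ_i log₂ λ_i + (1-λ_i) log₂(1-λ_i)] satisfies 0 ≤ S^t(λ) ≤ d log₂ d - (d-1) log₂(d-1). -/
open Real Finset

lemma gibbs_term (p q : ℝ) (hp : 0 ≤ p) (hq : 0 < q) :
    p * logb 2 q - p * logb 2 p ≤ (q - p) / Real.log 2 := by
  have hlog2 : 0 < Real.log 2 := Real.log_pos (by norm_num)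
  rcases eq_or_lt_of_le hp with h | h
  · subst h
    simp
    positivity
  · have hb := Real.log_le_sub_one_of_pos (div_pos hq h)
    rw [Real.log_div hq.ne' h.ne'] at hb
    have : p * (Real.log q - Real.log p) ≤ p * (q / p - 1) :=
      mul_le_mul_of_nonneg_left hb hp
    have h2 : p * (q / p - 1) = q - p := by field_simp
    rw [Real.logb, Real.logb]
    calc p * (Real.log q / Real.log 2) - p * (Real.log p / Real.log 2)
        = (p * Real.log q - p * Real.log p) / Real.log 2 := by ring
      _ ≤ (q - p) / Real.log 2 := by
          have h3 : p * Real.log q - p * Real.log p ≤ q - p := by nlinarith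
          gcongr

lemma term_nonpos (x : ℝ) (h0 : 0 ≤ x) (h1 : x ≤ 1) : x * logb 2 x ≤ 0 :=
  mul_nonpos_of_nonneg_of_nonpos h0 (Real.logb_nonpos (by norm_num) h0 h1)

theorem total_entropy_bounds (d : ℕ) (lam : Fin d → ℝ)
    (h0 : ∀ i, 0 ≤ lam i) (hsum : ∑ i, lam i = 1) :
    0 ≤ -∑ i, (lam i * logb 2 (lam i) + (1 - lam i) * logb 2 (1 - lam i)) ∧
    -∑ i, (lam i * logb 2 (lam i) + (1 - lam i) * logb 2 (1 - lam i)) ≤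
      (d : ℝ) * logb 2 d - ((d : ℝ) - 1) * logb 2 ((d : ℝ) - 1) := by
  have hle1 : ∀ i, lam i ≤ 1 := by
    intro i
    calc lam i ≤ ∑ j, lam j :=
          Finset.single_le_sum (fun j _ => h0 j) (Finset.mem_univ i)
      _ = 1 := hsum
  constructor
  · rw [neg_nonneg]
    apply Finset.sum_nonpos
    intro i _
    have t1 := term_nonpos (lam i) (h0 i) (hle1 i)
    have t2 := term_nonpos (1 - lam i) (by linarith [hle1 i]) (by linarith [h0 i])
    linarith
  · -- d ≥ 1
    have hd1 : 1 ≤ d := by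
      by_contra h
      interval_cases d
      simp at hsum
    rcases eq_or_lt_of_le hd1 with hd | hd2
    · -- d = 1
      subst hd
      have h1 : lam 0 = 1 := by simpa using hsum
      simp [Fin.sum_univ_one, h1]
    · have hd2' : 2 ≤ d := hd2
      have hdpos : (0:ℝ) < d := by positivity
      have hdm1 : (0:ℝ) < (d:ℝ) - 1 := by
        have : (2:ℝ) ≤ d := by exact_mod_cast hd2'
        linarith
      have hlog2 : 0 < Real.log 2 := Real.log_pos (by norm_num)
      have key : ∀ i ∈ Finset.univ (α := Fin d),
          lam i * logb 2 (1/(d:ℝ)) - lam i * logb 2 (lam i)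
            + ((1 - lam i) * logb 2 (((d:ℝ)-1)/d) - (1 - lam i) * logb 2 (1 - lam i))
          ≤ (1/(d:ℝ) - lam i) / Real.log 2 + ((((d:ℝ)-1)/d - (1 - lam i)) / Real.log 2) := by
        intro i _
        have g1 := gibbs_term (lam i) (1/(d:ℝ)) (h0 i) (by positivity)
        have g2 := gibbs_term (1 - lam i) (((d:ℝ)-1)/d)
          (by linarith [hle1 i]) (by positivity)
        linarith
      have hsum2 : ∑ i, (1 - lam i) = (d:ℝ) - 1 := by
        rw [Finset.sum_sub_distrib, hsum]
        simp
      have big := Finset.sum_le_sum key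
      rw [Finset.sum_add_distrib, Finset.sum_sub_distrib, Finset.sum_sub_distrib,
        ← Finset.sum_mul, ← Finset.sum_mul] at big
      rw [hsum, hsum2] at big
      have hrhs : ∑ i : Fin d, ((1/(d:ℝ) - lam i) / Real.log 2
          + ((((d:ℝ)-1)/d - (1 - lam i)) / Real.log 2)) = 0 := by
        rw [Finset.sum_add_distrib, ← Finset.sum_div, ← Finset.sum_div,
          Finset.sum_sub_distrib, Finset.sum_sub_distrib, hsum, hsum2]
        rw [Finset.sum_const, Finset.sum_const, Finset.card_fin, nsmul_eq_mul,
          nsmul_eq_mul]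
        have e1 : (d:ℝ) * (1/(d:ℝ)) - 1 = 0 := by field_simp; ring
        have e2 : (d:ℝ) * (((d:ℝ)-1)/d) - ((d:ℝ)-1) = 0 := by field_simp; ring
        rw [e1, e2]
        simp
      rw [hrhs] at big
      have hlogb1 : logb 2 (1/(d:ℝ)) = - logb 2 d := by
        rw [one_div, Real.logb_inv]
      have hlogb2 : logb 2 (((d:ℝ)-1)/d) = logb 2 ((d:ℝ)-1) - logb 2 d := by
        rw [Real.logb_div hdm1.ne' hdpos.ne']
      rw [hlogb1, hlogb2] at big
      have expand : ∑ i, (lam i * logb 2 (lam i) + (1 - lam i) * logb 2 (1 - lam i))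
          = ∑ i, lam i * logb 2 (lam i) + ∑ i, (1 - lam i) * logb 2 (1 - lam i) :=
        Finset.sum_add_distrib
      rw [expand]
      nlinarith [big]
end

section
/- The function h(x) = -((1+√(1-x²))/2) log₂((1+√(1-x²))/2) - ((1-√(1-x²))/2) log₂((1-√(1-x²))/2) is convex on [0,1]. -/
open Real

noncomputable def hFun (x : ℝ) : ℝ :=
  -((1 + Real.sqrt (1 - x ^ 2)) / 2) * logb 2 ((1 + Real.sqrt (1 - x ^ 2)) / 2)
    - ((1 - Real.sqrt (1 - x ^ 2)) / 2) * logb 2 ((1 - Real.sqrt (1 - x ^ 2)) / 2)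

noncomputable def sF (x : ℝ) : ℝ := Real.sqrt (1 - x ^ 2)
noncomputable def phi (x : ℝ) : ℝ :=
  1 - ((1 + sF x) * Real.log (1 + sF x) + (1 - sF x) * Real.log (1 - sF x)) / (2 * Real.log 2)
noncomputable def phiD (x : ℝ) : ℝ :=
  x * (Real.log (1 + sF x) - Real.log (1 - sF x)) / (2 * sF x * Real.log 2)
noncomputable def phiDD (x : ℝ) : ℝ :=
  (Real.log (1 + sF x) - Real.log (1 - sF x) - 2 * sF x) / (2 * (sF x) ^ 3 * Real.log 2)

lemma key_ineq {s : ℝ} (h0 : 0 < s) (h1 : s < 1) :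
    2 * s < Real.log (1 + s) - Real.log (1 - s) := by
  have hmono : StrictMonoOn (fun t => Real.log (1 + t) - Real.log (1 - t) - 2 * t)
      (Set.Icc 0 s) := by
    apply strictMonoOn_of_deriv_pos (convex_Icc 0 s)
    · apply ContinuousOn.sub
      apply ContinuousOn.sub
      · exact Real.continuousOn_log.comp (by fun_prop) (fun t ht => by
          rcases ht with ⟨h0t, hts⟩
          have h : (0:ℝ) < 1 + t := by linarith
          simpa using h.ne')
      · exact Real.continuousOn_log.comp (by fun_prop) (fun t ht => by
          rcases ht with ⟨h0t, hts⟩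
          have h2 : t < 1 := lt_of_le_of_lt hts h1
          have h : (0:ℝ) < 1 - t := by linarith
          simpa using h.ne')
      · fun_prop
    · intro t ht
      rw [interior_Icc] at ht
      obtain ⟨h0t, hts⟩ := ht
      have ht1 : t < 1 := hts.trans h1
      have h1p : (0:ℝ) < 1 + t := by linarith
      have h1m : (0:ℝ) < 1 - t := by linarith
      have d1 : HasDerivAt (fun u => Real.log (1 + u)) (1 / (1 + t)) t := by
        have := ((hasDerivAt_id t).const_add 1).log (ne_of_gt h1p)
        simpa using this
      have d2 : HasDerivAt (fun u => Real.log (1 - u)) (-1 / (1 - t)) t := by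
        have := ((hasDerivAt_id t).const_sub 1).log (ne_of_gt h1m)
        simpa using this
      have d3 : HasDerivAt (fun u => Real.log (1 + u) - Real.log (1 - u) - 2 * u)
          (1 / (1 + t) - (-1 / (1 - t)) - 2) t :=
        (d1.sub d2).sub (by simpa using (hasDerivAt_id t).const_mul (2:ℝ))
      rw [d3.deriv]
      rw [div_sub_div _ _ (ne_of_gt h1p) (ne_of_gt h1m)]
      have : (0:ℝ) < (1+t)*(1-t) := by positivity
      rw [sub_pos, lt_div_iff₀ this]
      nlinarith
  have := hmono (Set.left_mem_Icc.2 h0.le) (Set.right_mem_Icc.2 h0.le) h0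
  simp only [Real.log_one, add_zero, sub_zero, mul_zero] at this
  simp at this
  linarith

lemma sF_hasDerivAt {x : ℝ} (hx : x ∈ Set.Ioo (0:ℝ) 1) :
    HasDerivAt sF (-x / sF x) x := by
  obtain ⟨h0, h1⟩ := hx
  have hpos : (0:ℝ) < 1 - x ^ 2 := by nlinarith
  have hinner : HasDerivAt (fun y : ℝ => 1 - y ^ 2) (-(2 * x)) x := by
    simpa using ((hasDerivAt_pow 2 x).const_sub 1)
  have := (Real.hasDerivAt_sqrt hpos.ne').comp x hinner
  refine this.congr_deriv (Eq.symm ?_)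
  unfold sF
  field_simp

lemma sF_facts {x : ℝ} (hx : x ∈ Set.Ioo (0:ℝ) 1) :
    0 < sF x ∧ sF x < 1 ∧ sF x ^ 2 = 1 - x ^ 2 := by
  obtain ⟨h0, h1⟩ := hx
  have hpos : (0:ℝ) < 1 - x ^ 2 := by nlinarith
  refine ⟨Real.sqrt_pos.2 hpos, ?_, Real.sq_sqrt hpos.le⟩
  rw [show (1:ℝ) = Real.sqrt 1 by simp]
  exact Real.sqrt_lt_sqrt hpos.le (by nlinarith)

lemma log2_ne : Real.log 2 ≠ 0 := by
  simpa using Real.log_ne_zero_of_pos_of_ne_one two_pos (by norm_num)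

lemma hFun_eq_phi {x : ℝ} (hx : x ∈ Set.Ioo (0:ℝ) 1) : hFun x = phi x := by
  obtain ⟨hs0, hs1, hssq⟩ := sF_facts hx
  have h1p : (0:ℝ) < 1 + sF x := by linarith
  have h1m : (0:ℝ) < 1 - sF x := by linarith
  have e1 : Real.log ((1 + sF x) / 2) = Real.log (1 + sF x) - Real.log 2 :=
    Real.log_div h1p.ne' two_ne_zero
  have e2 : Real.log ((1 - sF x) / 2) = Real.log (1 - sF x) - Real.log 2 :=
    Real.log_div h1m.ne' two_ne_zero
  show -((1 + sF x) / 2) * logb 2 ((1 + sF x) / 2)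
      - ((1 - sF x) / 2) * logb 2 ((1 - sF x) / 2) = phi x
  unfold phi
  simp only [Real.logb, e1, e2]
  field_simp
  ring

lemma phi_hasDerivAt {x : ℝ} (hx : x ∈ Set.Ioo (0:ℝ) 1) :
    HasDerivAt phi (phiD x) x := by
  obtain ⟨hs0, hs1, hssq⟩ := sF_facts hx
  have hds := sF_hasDerivAt hx
  have h1p : (0:ℝ) < 1 + sF x := by linarith
  have h1m : (0:ℝ) < 1 - sF x := by linarith
  have ha : HasDerivAt (fun y => 1 + sF y) (-x / sF x) x := hds.const_add 1
  have hb : HasDerivAt (fun y => 1 - sF y) (-(-x / sF x)) x := hds.const_sub 1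
  have hla : HasDerivAt (fun y => Real.log (1 + sF y)) ((-x / sF x) / (1 + sF x)) x :=
    ha.log h1p.ne'
  have hlb : HasDerivAt (fun y => Real.log (1 - sF y)) ((-(-x / sF x)) / (1 - sF x)) x :=
    hb.log h1m.ne'
  have hta : HasDerivAt (fun y => (1 + sF y) * Real.log (1 + sF y))
      ((-x / sF x) * Real.log (1 + sF x) + (1 + sF x) * ((-x / sF x) / (1 + sF x))) x :=
    ha.mul hla
  have htb : HasDerivAt (fun y => (1 - sF y) * Real.log (1 - sF y))
      ((-(-x / sF x)) * Real.log (1 - sF x) + (1 - sF x) * ((-(-x / sF x)) / (1 - sF x))) x :=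
    hb.mul hlb
  have hsum := ((hta.add htb).div_const (2 * Real.log 2)).const_sub 1
  refine hsum.congr_deriv (Eq.symm ?_)
  unfold phiD
  have hlog2 := log2_ne
  field_simp
  ring

lemma phiD_hasDerivAt {x : ℝ} (hx : x ∈ Set.Ioo (0:ℝ) 1) :
    HasDerivAt phiD (phiDD x) x := by
  obtain ⟨hs0, hs1, hssq⟩ := sF_facts hx
  have hds := sF_hasDerivAt hx
  have h1p : (0:ℝ) < 1 + sF x := by linarith
  have h1m : (0:ℝ) < 1 - sF x := by linarith
  have hlog2 := log2_ne
  have ha : HasDerivAt (fun y => 1 + sF y) (-x / sF x) x := hds.const_add 1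
  have hb : HasDerivAt (fun y => 1 - sF y) (-(-x / sF x)) x := hds.const_sub 1
  have hla : HasDerivAt (fun y => Real.log (1 + sF y)) ((-x / sF x) / (1 + sF x)) x :=
    ha.log h1p.ne'
  have hlb : HasDerivAt (fun y => Real.log (1 - sF y)) ((-(-x / sF x)) / (1 - sF x)) x :=
    hb.log h1m.ne'
  have hN : HasDerivAt (fun y => y * (Real.log (1 + sF y) - Real.log (1 - sF y)))
      (1 * (Real.log (1 + sF x) - Real.log (1 - sF x)) +
        x * ((-x / sF x) / (1 + sF x) - (-(-x / sF x)) / (1 - sF x))) x :=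
    (hasDerivAt_id x).mul (hla.sub hlb)
  have hM : HasDerivAt (fun y => 2 * sF y * Real.log 2) (2 * (-x / sF x) * Real.log 2) x := by
    simpa [mul_comm, mul_assoc] using (hds.const_mul 2).mul_const (Real.log 2)
  have hMne : 2 * sF x * Real.log 2 ≠ 0 := by
    have : (0:ℝ) < Real.log 2 := Real.log_pos (by norm_num)
    positivity
  have hdiv := hN.div hM hMne
  refine hdiv.congr_deriv (Eq.symm ?_)
  unfold phiDD
  have hx2 : x ^ 2 = 1 - sF x ^ 2 := by linarith
  have hxne : x ≠ 0 := (hx.1).ne'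
  field_simp
  linear_combination (2 * sF x - (1 - sF x ^ 2) *
    (Real.log (1 + sF x) - Real.log (1 - sF x))) * hx2

lemma hFun_continuousOn : ContinuousOn hFun (Set.Icc (0:ℝ) 1) := by
  have heq : hFun = fun x =>
      -((((1 + Real.sqrt (1 - x ^ 2)) / 2) * Real.log ((1 + Real.sqrt (1 - x ^ 2)) / 2)
        + ((1 - Real.sqrt (1 - x ^ 2)) / 2) * Real.log ((1 - Real.sqrt (1 - x ^ 2)) / 2))
        / Real.log 2) := by
    funext x
    unfold hFun
    simp only [Real.logb]
    ring
  rw [heq]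
  have h1 : Continuous fun x : ℝ => ((1 + Real.sqrt (1 - x ^ 2)) / 2) *
      Real.log ((1 + Real.sqrt (1 - x ^ 2)) / 2) :=
    Real.continuous_mul_log.comp (by fun_prop)
  have h2 : Continuous fun x : ℝ => ((1 - Real.sqrt (1 - x ^ 2)) / 2) *
      Real.log ((1 - Real.sqrt (1 - x ^ 2)) / 2) :=
    Real.continuous_mul_log.comp (by fun_prop)
  exact (((h1.add h2).div_const _).neg).continuousOn

theorem hFun_convexOn : ConvexOn ℝ (Set.Icc (0:ℝ) 1) hFun := by
  apply convexOn_of_hasDerivWithinAt2_nonneg (f' := phiD) (f'' := phiDD)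
    (convex_Icc 0 1) hFun_continuousOn
  · intro x hx
    rw [interior_Icc] at hx
    have hev : hFun =ᶠ[nhds x] phi :=
      Filter.eventuallyEq_of_mem (isOpen_Ioo.mem_nhds hx) (fun y hy => hFun_eq_phi hy)
    exact (((phi_hasDerivAt hx).congr_of_eventuallyEq hev).hasDerivWithinAt)
  · intro x hx
    rw [interior_Icc] at hx
    exact (phiD_hasDerivAt hx).hasDerivWithinAt
  · intro x hx
    rw [interior_Icc] at hx
    obtain ⟨hs0, hs1, hssq⟩ := sF_facts hx
    have hnum : 0 ≤ Real.log (1 + sF x) - Real.log (1 - sF x) - 2 * sF x := by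
      have := key_ineq hs0 hs1
      linarith
    have hden : (0:ℝ) < 2 * (sF x) ^ 3 * Real.log 2 := by
      have : (0:ℝ) < Real.log 2 := Real.log_pos (by norm_num)
      positivity
    unfold phiDD
    positivity
end
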